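/- Let 𝕂 be ℝ or ℂ, let X be a 𝕂-Hilbert space with Hilbert basis (b_i)_{i∈ι}, and fix ξ ∈ X. Let T : X → X be a continuous linear map satisfying T η = ∑'_{i∈ι} ⟨b_i, ξ⟩·⟨b_i, η⟩ • b_i for every η ∈ X. Then T(b_i) = ⟨b_i, ξ⟩ • b_i for every i, the family i ↦ ‖T(b_i)‖² is summable (i.e., T is Hilbert–Schmidt with respect to this basis), and T is a compact operator. -/

import Mathlib

open Filter Topology

private lemma stmt_2_rankOne_compact {𝕜 : Type*} [RCLike 𝕜] {X : Type*} [NormedAddCommGroup X]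
    [NormedSpace 𝕜 X] (φ : X →L[𝕜] 𝕜) (v : X) :
    IsCompactOperator (φ.smulRight v) := by
  rw [isCompactOperator_iff_exists_mem_nhds_image_subset_compact]
  refine ⟨Metric.closedBall 0 1, Metric.closedBall_mem_nhds 0 one_pos,
    (fun a : 𝕜 => a • v) '' Metric.closedBall 0 ‖φ‖,
    (isCompact_closedBall (0:𝕜) ‖φ‖).image (continuous_id.smul continuous_const), ?_⟩
  rintro _ ⟨x, hx, rfl⟩
  refine ⟨φ x, ?_, by simp⟩
  rw [Metric.mem_closedBall, dist_zero_right]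
  calc ‖φ x‖ ≤ ‖φ‖ * ‖x‖ := φ.le_opNorm x
    _ ≤ ‖φ‖ * 1 :=
        mul_le_mul_of_nonneg_left (mem_closedBall_zero_iff.mp hx) (norm_nonneg φ)
    _ = ‖φ‖ := mul_one _

private lemma stmt_2_sum_compact {𝕜 : Type*} [RCLike 𝕜] {X : Type*} [NormedAddCommGroup X]
    [NormedSpace 𝕜 X] {α : Type*} (s : Finset α) (R : α → X →L[𝕜] X)
    (h : ∀ i, IsCompactOperator (R i)) :
    IsCompactOperator ((∑ i ∈ s, R i : X →L[𝕜] X) : X → X) := by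
  classical
  induction s using Finset.induction_on with
  | empty => simpa using isCompactOperator_zero
  | @insert a t hx ih =>
      rw [Finset.sum_insert hx, ContinuousLinearMap.coe_add']
      exact IsCompactOperator.add (h _) ih

/-- If `T` is a continuous linear operator on a Hilbert space given by
`T η = ∑' i, ⟨b i, ξ⟩⟨b i, η⟩ • b i` for a Hilbert basis `b` and fixed `ξ`, then
`T (b i) = ⟨b i, ξ⟩ • b i` for each `i`, `T` is Hilbert–Schmidt with respect to `b`
(the family `i ↦ ‖T (b i)‖²` is summable), and `T` is a compact operator. -/
theorem stmt_2 {𝕜 : Type*} [RCLike 𝕜] {X : Type*} [NormedAddCommGroup X]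
    [InnerProductSpace 𝕜 X] [CompleteSpace X] {ι : Type*}
    (b : HilbertBasis ι 𝕜 X) (ξ : X) (T : X →L[𝕜] X)
    (hT : ∀ η : X, T η = ∑' i : ι, ((inner 𝕜 (b i) ξ : 𝕜) * (inner 𝕜 (b i) η : 𝕜)) • b i) :
    (∀ i : ι, T (b i) = (inner 𝕜 (b i) ξ : 𝕜) • b i) ∧
      Summable (fun i : ι => ‖T (b i)‖ ^ 2) ∧
      IsCompactOperator T := by
    classical
  set c : ι → 𝕜 := fun i => inner 𝕜 (b i) ξ with hc
  have hbi : ∀ i, ‖b i‖ = 1 := fun i => b.orthonormal.1 i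
  have horth := orthonormal_iff_ite.mp b.orthonormal
  have hcξ : ∀ i, ‖c i‖ ≤ ‖ξ‖ := fun i => by
    simpa [hbi i] using norm_inner_le_norm (𝕜 := 𝕜) (b i) ξ
  have hpow : ∀ x : ℝ, x ^ ((2:ENNReal).toReal) = x ^ (2:ℕ) := fun x => by
    rw [show ((2:ENNReal).toReal) = ((2:ℕ):ℝ) by norm_num, Real.rpow_natCast]
  -- Part 1
  have h1 : ∀ i : ι, T (b i) = c i • b i := by
    intro i
    rw [hT (b i), tsum_eq_single i (fun j hj => by
      rw [horth j i, if_neg hj, mul_zero, zero_smul]),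
      horth i i, if_pos rfl, mul_one]
  -- square-summability of c
  have hc2 : Summable (fun i => ‖c i‖ ^ 2) := by
    have := (lp.memℓp (b.repr ξ)).summable (p := 2) (by norm_num)
    simp only [b.repr_apply_apply, hpow] at this
    exact this
  -- Part 2
  have h2 : Summable (fun i : ι => ‖T (b i)‖ ^ 2) := by
    refine hc2.congr fun i => ?_
    rw [h1 i, norm_smul, hbi i, mul_one]
  -- ℓ² membership of the coefficient family
  have hmem : ∀ η : X, Memℓp (fun i => c i * inner 𝕜 (b i) η) 2 := by
    intro η
    apply memℓp_gen
    have hη := (lp.memℓp (b.repr η)).summable (p := 2) (by norm_num)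
    simp only [b.repr_apply_apply, hpow] at hη
    simp only [hpow]
    refine (hη.mul_left (‖ξ‖ ^ (2:ℕ))).of_nonneg_of_le (fun i => by positivity) (fun i => ?_)
    rw [← mul_pow, norm_mul]
    exact pow_le_pow_left₀ (by positivity)
      (mul_le_mul_of_nonneg_right (hcξ i) (norm_nonneg _)) 2
  set g : X → lp (fun _ : ι => 𝕜) 2 := fun η => ⟨fun i => c i * inner 𝕜 (b i) η, hmem η⟩ with hg
  have hgcoe : ∀ η i, g η i = c i * inner 𝕜 (b i) η := fun η i => rfl
  have hgsum : ∀ η, HasSum (fun i => (c i * (inner 𝕜 (b i) η : 𝕜)) • b i) (b.repr.symm (g η)) :=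
    fun η => b.hasSum_repr_symm (g η)
  have hTeq : ∀ η, T η = b.repr.symm (g η) := fun η => by
    rw [hT η, (hgsum η).tsum_eq]
  have hrepr : ∀ η, b.repr (T η) = g η := fun η => by
    rw [hTeq η, LinearIsometryEquiv.apply_symm_apply]
  -- the finite-rank approximations
  set F : Finset ι → (X →L[𝕜] X) :=
    fun s => ∑ i ∈ s, (innerSL 𝕜 (b i)).smulRight (c i • b i) with hF
  have hFapp : ∀ s η, F s η = ∑ i ∈ s, (c i * (inner 𝕜 (b i) η : 𝕜)) • b i := by
    intro s η
    rw [hF]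
    simp only [ContinuousLinearMap.sum_apply, ContinuousLinearMap.smulRight_apply,
      innerSL_apply_apply]
    refine Finset.sum_congr rfl fun i _ => ?_
    rw [smul_smul, mul_comm]
  have hFcompact : ∀ s, IsCompactOperator (F s) := fun s =>
    stmt_2_sum_compact s _ (fun i => stmt_2_rankOne_compact _ _)
  -- coordinates of the error term
  have herrcoord : ∀ (s : Finset ι) η (j : ι),
      b.repr (T η - F s η) j = if j ∈ s then 0 else c j * inner 𝕜 (b j) η := by
    intro s η j
    rw [map_sub, lp.coeFn_sub, Pi.sub_apply, hrepr, hgcoe]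
    rw [b.repr_apply_apply, hFapp, inner_sum]
    simp only [inner_smul_right, horth, mul_ite, mul_one, mul_zero, Finset.sum_ite_eq,
      c]
    by_cases hj : j ∈ s <;> simp [hj]
  -- tail sums
  set tail : Finset ι → ℝ := fun s => ∑' j : {x : ι // x ∉ s}, ‖c j‖ ^ 2 with htail
  have htails : ∀ s, 0 ≤ tail s := fun s => tsum_nonneg (fun j => by positivity)
  have htail0 : Tendsto tail atTop (𝓝 0) :=
    tendsto_tsum_compl_atTop_zero (fun j => ‖c j‖ ^ 2)
  -- norm estimate
  have hest : ∀ (s : Finset ι) η, ‖T η - F s η‖ ^ 2 ≤ tail s * ‖η‖ ^ 2 := by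
    intro s η
    have hiso : ‖T η - F s η‖ = ‖b.repr (T η - F s η)‖ := (b.repr.norm_map _).symm
    rw [hiso]
    have hnorm := lp.norm_rpow_eq_tsum (p := 2) (by norm_num) (b.repr (T η - F s η))
    simp only [hpow] at hnorm
    rw [hnorm]
    have hsumL : Summable (fun j => ‖b.repr (T η - F s η) j‖ ^ (2:ℕ)) := by
      have := (lp.memℓp (b.repr (T η - F s η))).summable (p := 2) (by norm_num)
      simpa only [hpow] using this
    have hsumR : Summable (fun j =>
        Set.indicator {x : ι | x ∉ s} (fun j => ‖c j‖ ^ 2) j * ‖η‖ ^ 2) :=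
      (hc2.indicator _).mul_right _
    calc (∑' j, ‖b.repr (T η - F s η) j‖ ^ (2:ℕ))
        ≤ ∑' j, Set.indicator {x : ι | x ∉ s} (fun j => ‖c j‖ ^ 2) j * ‖η‖ ^ 2 := by
          refine Summable.tsum_le_tsum (fun j => ?_) hsumL hsumR
          rw [herrcoord s η j]
          by_cases hj : j ∈ s
          · simp [hj, Set.indicator_of_notMem, Set.mem_setOf_eq]
          · rw [if_neg hj, Set.indicator_of_mem (by simpa using hj), norm_mul, mul_pow]
            refine mul_le_mul_of_nonneg_left ?_ (by positivity)
            have : ‖(inner 𝕜 (b j) η : 𝕜)‖ ≤ ‖η‖ := by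
              simpa [hbi j] using norm_inner_le_norm (𝕜 := 𝕜) (b j) η
            exact pow_le_pow_left₀ (norm_nonneg _) this 2
      _ = (∑' j, Set.indicator {x : ι | x ∉ s} (fun j => ‖c j‖ ^ 2) j) * ‖η‖ ^ 2 :=
          tsum_mul_right
      _ = tail s * ‖η‖ ^ 2 := by
          rw [htail]
          congr 1
          exact (tsum_subtype {x : ι | x ∉ s} (fun j => ‖c j‖ ^ 2)).symm
  have hopnorm : ∀ s : Finset ι, ‖T - F s‖ ≤ Real.sqrt (tail s) := by
    intro s
    refine ContinuousLinearMap.opNorm_le_bound _ (Real.sqrt_nonneg _) (fun η => ?_)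
    rw [ContinuousLinearMap.sub_apply]
    have h := hest s η
    have h1' : ‖T η - F s η‖ = Real.sqrt (‖T η - F s η‖ ^ 2) :=
      (Real.sqrt_sq (norm_nonneg _)).symm
    rw [h1']
    calc Real.sqrt (‖T η - F s η‖ ^ 2) ≤ Real.sqrt (tail s * ‖η‖ ^ 2) :=
          Real.sqrt_le_sqrt h
      _ = Real.sqrt (tail s) * ‖η‖ := by
          rw [Real.sqrt_mul (htails s), Real.sqrt_sq (norm_nonneg _)]
  have htendsto : Tendsto F atTop (𝓝 T) := by
    rw [tendsto_iff_norm_sub_tendsto_zero]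
    have hsq : Tendsto (fun s => Real.sqrt (tail s)) atTop (𝓝 0) := by
      have := (Real.continuous_sqrt.tendsto 0).comp htail0
      simpa [Function.comp_def] using this
    refine squeeze_zero (fun s => norm_nonneg _) (fun s => ?_) hsq
    rw [norm_sub_rev]
    exact hopnorm s
  exact ⟨h1, h2, isCompactOperator_of_tendsto htendsto (Eventually.of_forall hFcompact)⟩
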